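/- The sequence L(ℓ), defined as the smallest number such that N_ℓ(a)·N_ℓ(b) - N_ℓ(a+b) > 0 for all a, b ≥ L(ℓ), is unbounded as ℓ → ∞. -/

import Mathlib

/-- Number of subgroups of `ℤ^ℓ` of index `n`. -/
noncomputable def g (ℓ n : ℕ) : ℕ := Nat.card {H : AddSubgroup (Fin ℓ → ℤ) // H.index = n}

/-- `N ℓ n = |Hom(ℤ^ℓ, S_n)| / n!`, the number of ℓ-tuples of pairwise
commuting permutations of `n` letters, divided by `n!`. -/
noncomputable def N (ℓ n : ℕ) : ℚ :=
  (Nat.card {π : Fin ℓ → Equiv.Perm (Fin n) // ∀ i j, Commute (π i) (π j)} : ℚ) / n.factorial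


/-- max product of parts of partition of n -/
def f : ℕ → ℕ
  | 0 => 1
  | 1 => 1
  | 2 => 2
  | 3 => 3
  | 4 => 4
  | (n+5) => 3 * f (n+2)

lemma f_pos : ∀ n, 0 < f n
  | 0 => by simp [f]
  | 1 => by simp [f]
  | 2 => by simp [f]
  | 3 => by simp [f]
  | 4 => by simp [f]
  | (n+5) => by have := f_pos (n+2); simp [f]; omega

lemma f_succ_le : ∀ j, f j ≤ f (j+1)
  | 0 => by simp [f]
  | 1 => by simp [f]
  | 2 => by simp [f]
  | 3 => by simp [f]
  | 4 => by show f 4 ≤ 3 * f 2; simp [f]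
  | (j+5) => by
      have h : f (j+2) ≤ f (j+3) := f_succ_le (j+2)
      show 3 * f (j+2) ≤ 3 * f (j+3); omega

lemma f_two_mul_le : ∀ j, 2 * f j ≤ f (j+2)
  | 0 => by simp [f]
  | 1 => by show 2 * f 1 ≤ f 3; simp [f]
  | 2 => by show 2 * f 2 ≤ f 4; simp [f]
  | 3 => by show 2 * f 3 ≤ 3 * f 2; simp [f]
  | 4 => by show 2 * f 4 ≤ 3 * f 3; simp [f]
  | (j+5) => by
      have h : 2 * f (j+2) ≤ f (j+4) := f_two_mul_le (j+2)
      show 2 * (3 * f (j+2)) ≤ 3 * f (j+4); omega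

lemma f_three_mul_le : ∀ j, 3 * f j ≤ f (j+3)
  | 0 => by simp [f]
  | 1 => by show 3 * f 1 ≤ f 4; simp [f]
  | (j+2) => le_refl _

lemma f_four_mul_le (j : ℕ) : 4 * f j ≤ f (j+4) := by
  have h1 := f_two_mul_le j
  have h2 : 2 * f (j+2) ≤ f (j+4) := f_two_mul_le (j+2)
  omega

lemma f_key : ∀ k j : ℕ, 1 ≤ k → k * f j ≤ f (k + j) := by
  intro k
  induction k using Nat.strong_induction_on with
  | _ k ih =>
    intro j hk
    match k, hk with
    | 1, _ => simpa [add_comm] using f_succ_le j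
    | 2, _ => simpa [add_comm] using f_two_mul_le j
    | 3, _ => simpa [add_comm] using f_three_mul_le j
    | 4, _ => simpa [add_comm] using f_four_mul_le j
    | (k+5), _ =>
      have h1 : (k+2) * f j ≤ f ((k+2) + j) := ih (k+2) (by omega) j (by omega)
      have h2 : 3 * f ((k+2)+j) ≤ f ((k+2)+j+3) := f_three_mul_le _
      have h3 : (k+2)+j+3 = (k+5)+j := by omega
      rw [h3] at h2
      have : (k+5) * f j ≤ 3 * ((k+2) * f j) := by
        have := f_pos j; nlinarith
      omega

lemma f_prod_le {ι : Type*} (s : Finset ι) (g : ι → ℕ) (hg : ∀ i ∈ s, 1 ≤ g i) :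
    ∏ i ∈ s, g i ≤ f (∑ i ∈ s, g i) := by
  classical
  induction s using Finset.induction_on with
  | empty => simp [f]
  | @insert x t hx ih =>
    rw [Finset.prod_insert hx, Finset.sum_insert hx]
    calc g x * ∏ i ∈ t, g i ≤ g x * f (∑ i ∈ t, g i) :=
          Nat.mul_le_mul_left _ (ih fun i hi => hg i (Finset.mem_insert_of_mem hi))
      _ ≤ f (g x + ∑ i ∈ t, g i) := f_key _ _ (hg x (Finset.mem_insert_self x t))

lemma f_val (q : ℕ) : f (3*q+4) = 4 * 3^q := by
  induction q with
  | zero => simp [f]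
  | succ q ih =>
    have h : 3*(q+1)+4 = (3*q+2)+5 := by omega
    rw [h]
    show 3 * f (3*q+4) = 4*3^(q+1)
    rw [ih]; ring
open Equiv MulAction

lemma closure_comm {G : Type*} [Group G] {s : Set G}
    (h : ∀ a ∈ s, ∀ b ∈ s, Commute a b) :
    ∀ x ∈ Subgroup.closure s, ∀ y ∈ Subgroup.closure s, Commute x y := by
  intro x hx y hy
  refine Subgroup.closure_induction₂ (p := fun x y _ _ => Commute x y)
    (fun x y hx hy => h x hx y hy)
    (fun x _ => Commute.one_left x) (fun x _ => Commute.one_right x)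
    (fun _ _ _ _ _ _ h1 h2 => h1.mul_left h2)
    (fun _ _ _ _ _ _ h1 h2 => h1.mul_right h2)
    (fun _ _ _ _ h1 => h1.inv_left) (fun _ _ _ _ h1 => h1.inv_right) hx hy

lemma nat_card_sigma {ι : Type*} [Fintype ι] (β : ι → Type*) [∀ i, Finite (β i)] :
    Nat.card (Σ i, β i) = ∑ i, Nat.card (β i) := by
  classical
  have : ∀ i, Fintype (β i) := fun i => Fintype.ofFinite _
  rw [Nat.card_eq_fintype_card, Fintype.card_sigma]
  exact Finset.sum_congr rfl fun i _ => (Nat.card_eq_fintype_card).symm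

lemma card_comm_subgroup_le (n : ℕ) (H : Subgroup (Perm (Fin n)))
    (hc : ∀ x ∈ H, ∀ y ∈ H, Commute x y) : Nat.card H ≤ f n := by
  classical
  set Ω := orbitRel.Quotient H (Fin n) with hΩ
  have : Fintype Ω := Fintype.ofFinite _
  set Φ : H → ((ω : Ω) → orbit H (Quotient.out ω)) :=
    fun g ω => ⟨g • Quotient.out ω, mem_orbit _ g⟩ with hΦ
  have hinj : Function.Injective Φ := by
    intro g h hgh
    have heval : ∀ ω : Ω, g • (Quotient.out ω : Fin n) = h • Quotient.out ω :=
      fun ω => Subtype.ext_iff.mp (congrFun hgh ω)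
    refine Subtype.ext (Equiv.ext fun x => ?_)
    show (g : Perm (Fin n)) x = (h : Perm (Fin n)) x
    set ω : Ω := ⟦x⟧ with hω
    have hrel : (Quotient.out ω : Fin n) ∈ orbit H x := by
      have : (⟦Quotient.out ω⟧ : Ω) = ⟦x⟧ := by rw [Quotient.out_eq, hω]
      exact Quotient.exact this
    obtain ⟨k, hk⟩ := hrel
    have hk : k • x = Quotient.out ω := hk
    have hx' : x = k⁻¹ • (Quotient.out ω : Fin n) := by
      rw [← hk]; simp [smul_smul]
    have hcomm : g * k⁻¹ = k⁻¹ * g := by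
      have := hc (g : Perm (Fin n)) g.2 ((k⁻¹ : H) : Perm (Fin n)) (k⁻¹ : H).2
      exact Subtype.ext this.eq
    have hcomm' : h * k⁻¹ = k⁻¹ * h := by
      have := hc (h : Perm (Fin n)) h.2 ((k⁻¹ : H) : Perm (Fin n)) (k⁻¹ : H).2
      exact Subtype.ext this.eq
    calc (g : Perm (Fin n)) x = g • x := rfl
      _ = (g * k⁻¹) • (Quotient.out ω : Fin n) := by rw [hx', smul_smul]
      _ = (k⁻¹ * g) • (Quotient.out ω : Fin n) := by rw [hcomm]
      _ = k⁻¹ • (g • (Quotient.out ω : Fin n)) := by rw [mul_smul]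
      _ = k⁻¹ • (h • (Quotient.out ω : Fin n)) := by rw [heval ω]
      _ = (h * k⁻¹) • (Quotient.out ω : Fin n) := by rw [hcomm', mul_smul]
      _ = h • x := by rw [mul_smul, ← hx']
      _ = (h : Perm (Fin n)) x := rfl
  have h1 : Nat.card H ≤ Nat.card ((ω : Ω) → orbit H (Quotient.out ω)) :=
    Nat.card_le_card_of_injective Φ hinj
  rw [Nat.card_pi] at h1
  have h2 : ∑ ω : Ω, Nat.card (orbit H (Quotient.out ω)) = n := by
    rw [← nat_card_sigma, ← Nat.card_congr (selfEquivSigmaOrbits H (Fin n)),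
      Nat.card_eq_fintype_card, Fintype.card_fin]
  have h3 := f_prod_le Finset.univ (fun ω : Ω => Nat.card (orbit H (Quotient.out ω)))
    (fun ω _ => by
      have : Nonempty (orbit H (Quotient.out ω)) := ⟨⟨_, mem_orbit_self _⟩⟩
      exact Nat.card_pos)
  rw [h2] at h3
  exact h1.trans h3
open Equiv MulAction

lemma upper_bound (n ℓ : ℕ) :
    Nat.card {π : Fin ℓ → Perm (Fin n) // ∀ i j, Commute (π i) (π j)} ≤
      Nat.card (Subgroup (Perm (Fin n))) * (f n)^ℓ := by
  classical
  have hft : Fintype (Subgroup (Perm (Fin n))) := Fintype.ofFinite _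
  rw [Nat.card_eq_fintype_card, Fintype.card_subtype]
  set S : Finset (Subgroup (Perm (Fin n))) :=
    Finset.univ.filter (fun H => ∀ x ∈ H, ∀ y ∈ H, Commute x y) with hS
  set FH : Subgroup (Perm (Fin n)) → Finset (Fin ℓ → Perm (Fin n)) :=
    fun H => Finset.univ.filter (fun π => ∀ i, π i ∈ H) with hFH
  have hsub : (Finset.univ.filter (fun π : Fin ℓ → Perm (Fin n) => ∀ i j, Commute (π i) (π j)))
      ⊆ S.biUnion FH := by
    intro π hπ
    rw [Finset.mem_filter] at hπ
    refine Finset.mem_biUnion.mpr ⟨Subgroup.closure (Set.range π), ?_, ?_⟩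
    · rw [hS, Finset.mem_filter]
      refine ⟨Finset.mem_univ _, ?_⟩
      refine closure_comm ?_
      rintro a ⟨i, rfl⟩ b ⟨j, rfl⟩
      exact hπ.2 i j
    · rw [hFH, Finset.mem_filter]
      exact ⟨Finset.mem_univ _, fun i => Subgroup.subset_closure ⟨i, rfl⟩⟩
  calc (Finset.univ.filter (fun π : Fin ℓ → Perm (Fin n) => ∀ i j, Commute (π i) (π j))).card
      ≤ (S.biUnion FH).card := Finset.card_le_card hsub
    _ ≤ ∑ H ∈ S, (FH H).card := Finset.card_biUnion_le
    _ ≤ ∑ _H ∈ S, (f n)^ℓ := by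
        refine Finset.sum_le_sum (fun H hH => ?_)
        have hcard : (FH H).card = (Nat.card H)^ℓ := by
          rw [hFH]
          rw [← Fintype.card_subtype]
          rw [Fintype.card_congr (Equiv.subtypePiEquivPi (p := fun _ b => b ∈ H))]
          simp [Nat.card_eq_fintype_card]
        rw [hcard]
        have hH' : ∀ x ∈ H, ∀ y ∈ H, Commute x y := by
          rw [hS, Finset.mem_filter] at hH; exact hH.2
        exact Nat.pow_le_pow_left (card_comm_subgroup_le n H hH') ℓ
    _ = S.card * (f n)^ℓ := by rw [Finset.sum_const, smul_eq_mul]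
    _ ≤ Nat.card (Subgroup (Perm (Fin n))) * (f n)^ℓ := by
        rw [Nat.card_eq_fintype_card]
        exact Nat.mul_le_mul_right _ (Finset.card_le_univ S)

def theta0 (m : ℕ) (g : ZMod 2 × (Fin m → ZMod 3)) : Perm (ZMod 2 ⊕ ZMod 3 × Fin m) :=
  Equiv.sumCongr (Equiv.addLeft g.1) (Equiv.prodCongrLeft fun i => Equiv.addLeft (g.2 i))

lemma theta0_mul (m : ℕ) (g h : ZMod 2 × (Fin m → ZMod 3)) :
    theta0 m g * theta0 m h = theta0 m h * theta0 m g := by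
  ext x
  rcases x with a | ⟨a, i⟩ <;>
    simp [theta0, Equiv.Perm.mul_apply, add_left_comm, add_comm, add_assoc]

lemma theta0_inj (m : ℕ) : Function.Injective (theta0 m) := by
  intro g g' hgg
  have h1 : (theta0 m g) (Sum.inl 0) = (theta0 m g') (Sum.inl 0) := by rw [hgg]
  have h2 : ∀ i, (theta0 m g) (Sum.inr (0, i)) = (theta0 m g') (Sum.inr (0, i)) :=
    fun i => by rw [hgg]
  simp only [theta0, Equiv.sumCongr_apply, Sum.map_inl, Sum.map_inr, Equiv.coe_addLeft,
    Equiv.prodCongrLeft_apply, add_zero, Sum.inl.injEq, Sum.inr.injEq, Prod.mk.injEq] at h1 h2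
  exact Prod.ext h1 (funext fun i => (h2 i).1)

lemma lower_bound (m ℓ : ℕ) :
    (2*3^m)^ℓ ≤ Nat.card {π : Fin ℓ → Perm (Fin (3*m+2)) // ∀ i j, Commute (π i) (π j)} := by
  classical
  have hcardP : Fintype.card (ZMod 2 ⊕ ZMod 3 × Fin m) = 3*m+2 := by
    simp; ring
  obtain e : (ZMod 2 ⊕ ZMod 3 × Fin m) ≃ Fin (3*m+2) := Fintype.equivFinOfCardEq hcardP
  set θ : (ZMod 2 × (Fin m → ZMod 3)) → Perm (Fin (3*m+2)) :=
    fun g => e.permCongr (theta0 m g) with hθ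
  have hinjθ : Function.Injective θ := fun g g' h => theta0_inj m (e.permCongr.injective h)
  have hcommθ : ∀ g h, Commute (θ g) (θ h) := by
    intro g h
    have h0 : ∀ y, theta0 m g (theta0 m h y) = theta0 m h (theta0 m g y) := by
      intro y
      calc theta0 m g (theta0 m h y) = (theta0 m g * theta0 m h) y := rfl
        _ = (theta0 m h * theta0 m g) y := by rw [theta0_mul]
        _ = _ := rfl
    have : ∀ x, (θ g * θ h) x = (θ h * θ g) x := by
      intro x
      simp [hθ, Equiv.Perm.mul_apply, Equiv.permCongr_apply, h0 (e.symm x)]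
    exact Equiv.ext this
  set Φ : (Fin ℓ → ZMod 2 × (Fin m → ZMod 3)) →
      {π : Fin ℓ → Perm (Fin (3*m+2)) // ∀ i j, Commute (π i) (π j)} :=
    fun v => ⟨fun i => θ (v i), fun i j => hcommθ _ _⟩ with hΦ
  have hinjΦ : Function.Injective Φ := by
    intro v w hvw
    funext i
    exact hinjθ (congrFun (Subtype.ext_iff.mp hvw) i)
  have hle := Nat.card_le_card_of_injective Φ hinjΦ
  have hc : Nat.card (Fin ℓ → ZMod 2 × (Fin m → ZMod 3)) = (2*3^m)^ℓ := by
    rw [Nat.card_eq_fintype_card, Fintype.card_fun]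
    simp
  rw [hc] at hle
  exact hle
set_option maxHeartbeats 1000000 in
/-- The minimal bound L(ℓ) with Δ_{a,b}^ℓ > 0 for all a, b ≥ L(ℓ) is unbounded in ℓ:
for every C there is an ℓ ≥ 2 such that every valid bound L for that ℓ exceeds C. -/
theorem L_unbounded :
    ∀ C : ℕ, ∃ ℓ : ℕ, 2 ≤ ℓ ∧
      ∀ L : ℕ, (∀ a b : ℕ, L ≤ a → L ≤ b → N ℓ a * N ℓ b - N ℓ (a + b) > 0) → C < L := by
  intro C
  classical
  obtain ⟨ℓ₀, hℓ₀⟩ := pow_unbounded_of_one_lt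
    (y := (9:ℚ)/8)
    (((Nat.card (Subgroup (Equiv.Perm (Fin (3*C+4)))))^2 * ((3*(2*C+2)+2).factorial) : ℕ) : ℚ)
    (by norm_num)
  refine ⟨max 2 ℓ₀, le_max_left _ _, fun L hL => ?_⟩
  by_contra hC
  push_neg at hC
  have hΔ := hL (3*C+4) (3*C+4) (by omega) (by omega)
  set ℓ := max 2 ℓ₀ with hℓ
  set K : ℕ := Nat.card (Subgroup (Equiv.Perm (Fin (3*C+4)))) with hK
  set cA : ℕ := Nat.card {π : Fin ℓ → Equiv.Perm (Fin (3*C+4)) // ∀ i j, Commute (π i) (π j)}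
    with hcA
  set cS : ℕ :=
    Nat.card {π : Fin ℓ → Equiv.Perm (Fin (3*(2*C+2)+2)) // ∀ i j, Commute (π i) (π j)}
    with hcS
  have hup : cA ≤ K * (4*3^C)^ℓ := by
    have h := upper_bound (3*C+4) ℓ
    rwa [f_val C] at h
  have hlo : (2*3^(2*C+2))^ℓ ≤ cS := lower_bound (2*C+2) ℓ
  have hNa : N ℓ (3*C+4) = (cA : ℚ) / (3*C+4).factorial := rfl
  have hNs : N ℓ ((3*C+4) + (3*C+4)) = (cS : ℚ) / (3*(2*C+2)+2).factorial := by
    rw [show (3*C+4)+(3*C+4) = 3*(2*C+2)+2 by ring]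
    rfl
  have hfacA : (0:ℚ) < ((3*C+4).factorial : ℚ) := by
    exact_mod_cast Nat.factorial_pos _
  have hfacS : (0:ℚ) < (((3*(2*C+2)+2).factorial : ℕ) : ℚ) := by
    exact_mod_cast Nat.factorial_pos _
  have goal2 : N ℓ (3*C+4) * N ℓ (3*C+4) ≤ N ℓ ((3*C+4)+(3*C+4)) := by
    rw [hNa, hNs, div_mul_div_comm, div_le_div_iff₀ (by positivity) hfacS]
    have h1 : (cA:ℚ) ≤ (K:ℚ) * (4*3^C:ℚ)^ℓ := by exact_mod_cast hup
    have hcAnn : (0:ℚ) ≤ (cA:ℚ) := by positivity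
    have hKnn : (0:ℚ) ≤ (K:ℚ) * (4*3^C:ℚ)^ℓ := by positivity
    calc (cA:ℚ) * cA * ((3*(2*C+2)+2).factorial : ℕ)
        ≤ ((K:ℚ) * (4*3^C)^ℓ) * ((K:ℚ) * (4*3^C)^ℓ) * ((3*(2*C+2)+2).factorial : ℕ) := by
          exact mul_le_mul_of_nonneg_right (mul_le_mul h1 h1 hcAnn hKnn) hfacS.le
      _ = ((K:ℚ)^2 * ((3*(2*C+2)+2).factorial : ℕ)) * ((16 * 9^C)^ℓ) := by
          have h9 : ((4:ℚ)*3^C) * (4*3^C) = 16 * 9^C := by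
            rw [show (9:ℚ) = 3*3 by norm_num, mul_pow]; ring
          have hpow : ((4:ℚ)*3^C)^ℓ * (4*3^C)^ℓ = (16*9^C)^ℓ := by
            rw [← mul_pow, h9]
          rw [← hpow]; ring
      _ ≤ (9/8)^ℓ * ((16 * 9^C)^ℓ) := by
          have h2 : ((K^2 * (3*(2*C+2)+2).factorial : ℕ) : ℚ) < (9/8)^ℓ₀ := hℓ₀
          have h3 : ((9:ℚ)/8)^ℓ₀ ≤ (9/8)^ℓ := by
            apply pow_le_pow_right₀ (by norm_num) (le_max_right _ _)
          have h4 : (0:ℚ) ≤ (16 * 9^C:ℚ)^ℓ := by positivity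
          push_cast at h2
          exact mul_le_mul_of_nonneg_right (h2.le.trans h3) h4
      _ = ((18 * 9^C : ℚ))^ℓ := by rw [← mul_pow]; congr 1; ring
      _ = (((2*3^(2*C+2) : ℕ) : ℚ))^ℓ := by
          have h5 : (3:ℚ)^(2*C+2) = 9^C * 9 := by
            rw [pow_add, pow_mul]; norm_num
          push_cast
          rw [h5]; ring
      _ ≤ (cS:ℚ) := by exact_mod_cast hlo
      _ ≤ (cS:ℚ) * (((3*C+4).factorial : ℚ) * ((3*C+4).factorial : ℚ)) := by
          refine le_mul_of_one_le_right (by positivity) ?_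
          have h6 : (1:ℚ) ≤ ((3*C+4).factorial : ℚ) := by
            exact_mod_cast Nat.one_le_iff_ne_zero.mpr (Nat.factorial_pos _).ne'
          have := mul_le_mul h6 h6 zero_le_one (zero_le_one.trans h6)
          simpa using this
  linarith
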